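/- Let A be an n×n real symmetric positive definite matrix, K ≥ 1, and let n = N_0 ≥ N_1 ≥ ⋯ ≥ N_K ≥ 1. For k = 1,…,K let Φ^{(k)} be an N_{k−1}×N_k real matrix with (Φ^{(k)})ᵀΦ^{(k)} = I_{N_k}; set 𝚽^{(k)} = Φ^{(1)}Φ^{(2)}⋯Φ^{(k)}, A^{(0)} = A, and A^{(k)} = ((𝚽^{(k)})ᵀA⁻¹𝚽^{(k)})⁻¹. Suppose there are ε_1,…,ε_K > 0 such that for every k and every y ∈ ℝ^{N_{k−1}}, ‖y − Φ^{(k)}(Φ^{(k)})ᵀy‖₂² ≤ ε_k² · yᵀA^{(k−1)}y. Then for all x ∈ ℝⁿ, ‖x − 𝚽^{(K)}(𝚽^{(K)})ᵀx‖₂ ≤ (Σ_{k=1}^K ε_k²)^{1/2} ‖x‖_A; moreover, with 𝚿^{(K)} = A⁻¹𝚽^{(K)}A^{(K)} and P^A the A-orthogonal projection onto the column span of 𝚿^{(K)}: for every x ∈ ℝⁿ with b = Ax, ‖x − P^A x‖_A ≤ (Σ_{k=1}^K ε_k²)^{1/2}‖b‖₂ and ‖x − P^A x‖₂ ≤ (Σ_{k=1}^K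 ε_k²)‖b‖₂, and ‖A⁻¹ − P^A A⁻¹‖₂ ≤ Σ_{k=1}^K ε_k². -/

import Mathlib

open Matrix BigOperators

noncomputable section

/-- Euclidean norm of a vector. -/
def norm2 {ι : Type} [Fintype ι] (x : ι → ℝ) : ℝ := Real.sqrt (x ⬝ᵥ x)

/-- `A`-energy norm of a vector: `‖x‖_A = √(xᵀ A x)`. -/
def normA {ι : Type} [Fintype ι] (A : Matrix ι ι ℝ) (x : ι → ℝ) : ℝ :=
  Real.sqrt (x ⬝ᵥ A.mulVec x)

/-- Spectral (ℓ²-operator) norm of a square real matrix. -/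
def specNorm {ι : Type} [Fintype ι] [DecidableEq ι] (B : Matrix ι ι ℝ) : ℝ :=
  ‖Matrix.toEuclideanCLM (𝕜 := ℝ) B‖

/-- Smallest value of the Rayleigh quotient; for a symmetric matrix this is the
smallest eigenvalue. -/
def lamMin {ι : Type} [Fintype ι] (B : Matrix ι ι ℝ) : ℝ :=
  sInf {r : ℝ | ∃ x : ι → ℝ, x ⬝ᵥ x = 1 ∧ r = x ⬝ᵥ B.mulVec x}

/-- Largest value of the Rayleigh quotient; for a symmetric matrix this is the
largest eigenvalue. -/
def lamMax {ι : Type} [Fintype ι] (B : Matrix ι ι ℝ) : ℝ :=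
  sSup {r : ℝ | ∃ x : ι → ℝ, x ⬝ᵥ x = 1 ∧ r = x ⬝ᵥ B.mulVec x}

section Helpers

variable {ι κ : Type} [Fintype ι] [Fintype κ]

open scoped MatrixOrder

lemma dotSelf_nonneg (x : ι → ℝ) : 0 ≤ x ⬝ᵥ x :=
  Finset.sum_nonneg fun i _ => mul_self_nonneg _

lemma norm2_nonneg' (x : ι → ℝ) : 0 ≤ norm2 x := Real.sqrt_nonneg _

lemma norm2_sq' (x : ι → ℝ) : norm2 x ^ 2 = x ⬝ᵥ x := Real.sq_sqrt (dotSelf_nonneg x)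

lemma dot_trans (Q : Matrix ι κ ℝ) (x : ι → ℝ) (v : κ → ℝ) :
    x ⬝ᵥ Q *ᵥ v = (Qᵀ *ᵥ x) ⬝ᵥ v := by
  rw [dotProduct_mulVec, mulVec_transpose]

lemma dotA_nonneg {A : Matrix ι ι ℝ} (hA : A.PosSemidef) (x : ι → ℝ) :
    0 ≤ x ⬝ᵥ A.mulVec x := by simpa using hA.dotProduct_mulVec_nonneg x

lemma normA_sq' {A : Matrix ι ι ℝ} (hA : A.PosSemidef) (x : ι → ℝ) :
    normA A x ^ 2 = x ⬝ᵥ A.mulVec x := Real.sq_sqrt (dotA_nonneg hA x)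

lemma dot_le_norm2_mul (x y : ι → ℝ) : x ⬝ᵥ y ≤ norm2 x * norm2 y := by
  have h := Finset.sum_mul_sq_le_sq_mul_sq Finset.univ x y
  calc x ⬝ᵥ y ≤ |x ⬝ᵥ y| := le_abs_self _
    _ = Real.sqrt ((x ⬝ᵥ y) ^ 2) := (Real.sqrt_sq_eq_abs _).symm
    _ ≤ Real.sqrt ((x ⬝ᵥ x) * (y ⬝ᵥ y)) := by
        apply Real.sqrt_le_sqrt
        simpa [dotProduct, pow_two] using h
    _ = norm2 x * norm2 y := Real.sqrt_mul (dotSelf_nonneg x) _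

lemma dotA_CS {A : Matrix ι ι ℝ} (hA : A.PosSemidef) (x y : ι → ℝ) :
    x ⬝ᵥ A *ᵥ y ≤ normA A x * normA A y := by
  classical
  set S := CFC.sqrt A with hSdef
  have hS : S * S = A := CFC.sqrt_mul_sqrt_self A hA.nonneg
  have hSsym : Sᵀ = S := by
    have := (CFC.sqrt_nonneg A).posSemidef.1
    rw [← Matrix.conjTranspose_eq_transpose_of_trivial]; exact this
  have key : ∀ u v : ι → ℝ, u ⬝ᵥ A *ᵥ v = (S *ᵥ u) ⬝ᵥ (S *ᵥ v) := by
    intro u v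
    rw [← hS, ← Matrix.mulVec_mulVec, dot_trans, hSsym]
  have hnx : normA A x = norm2 (S *ᵥ x) := by
    unfold normA norm2; rw [key]
  have hny : normA A y = norm2 (S *ᵥ y) := by
    unfold normA norm2; rw [key]
  rw [key, hnx, hny]
  exact dot_le_norm2_mul _ _


lemma transpose_eq_of_herm {M : Matrix ι ι ℝ} (h : M.IsHermitian) : Mᵀ = M := by
  rw [← Matrix.conjTranspose_eq_transpose_of_trivial]; exact h

lemma posDef_conj [DecidableEq ι] [DecidableEq κ] {A : Matrix ι ι ℝ} (hA : A.PosDef)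
    (Q : Matrix ι κ ℝ) (hQ : Qᵀ * Q = 1) : (Qᵀ * A * Q).PosDef := by
  refine Matrix.PosDef.of_dotProduct_mulVec_pos ?_ ?_
  · have hAt : Aᵀ = A := transpose_eq_of_herm hA.1
    show (Qᵀ * A * Q)ᴴ = _
    rw [Matrix.conjTranspose_eq_transpose_of_trivial, Matrix.transpose_mul, Matrix.transpose_mul,
      Matrix.transpose_transpose, hAt, Matrix.mul_assoc]
  · intro z hz
    have hQz : Q *ᵥ z ≠ 0 := by
      intro h
      apply hz
      have : Qᵀ *ᵥ (Q *ᵥ z) = 0 := by rw [h, Matrix.mulVec_zero]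
      rwa [Matrix.mulVec_mulVec, hQ, Matrix.one_mulVec] at this
    have h2 := hA.dotProduct_mulVec_pos hQz
    simp only [star_trivial] at h2 ⊢
    have heq : z ⬝ᵥ (Qᵀ * A * Q) *ᵥ z = (Q *ᵥ z) ⬝ᵥ A *ᵥ (Q *ᵥ z) := by
      rw [Matrix.mul_assoc, ← Matrix.mulVec_mulVec, dot_trans Qᵀ, Matrix.transpose_transpose,
        ← Matrix.mulVec_mulVec]
    linarith [h2]

lemma specNorm_le_of_bound [DecidableEq ι] {B : Matrix ι ι ℝ} {C : ℝ} (hC : 0 ≤ C)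
    (h : ∀ v : ι → ℝ, norm2 (B *ᵥ v) ≤ C * norm2 v) : specNorm B ≤ C := by
  refine ContinuousLinearMap.opNorm_le_bound _ hC fun v => ?_
  have hv : v = (WithLp.equiv 2 (ι → ℝ)).symm ((WithLp.equiv 2 (ι → ℝ)) v) := by simp
  have hnorm : ∀ y : ι → ℝ, ‖(WithLp.equiv 2 (ι → ℝ)).symm y‖ = norm2 y := by
    intro y
    rw [EuclideanSpace.norm_eq]
    unfold norm2
    congr 1
    simp [dotProduct, Real.norm_eq_abs, sq_abs, pow_two]
  calc ‖(Matrix.toEuclideanCLM (𝕜 := ℝ) B) v‖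
      = ‖(Matrix.toEuclideanCLM (𝕜 := ℝ) B) ((WithLp.equiv 2 (ι → ℝ)).symm ((WithLp.equiv 2 (ι → ℝ)) v))‖ := by rw [← hv]
    _ = ‖(WithLp.equiv 2 (ι → ℝ)).symm (B *ᵥ ((WithLp.equiv 2 (ι → ℝ)) v))‖ := by
        rfl
    _ = norm2 (B *ᵥ ((WithLp.equiv 2 (ι → ℝ)) v)) := hnorm _
    _ ≤ C * norm2 ((WithLp.equiv 2 (ι → ℝ)) v) := h _
    _ = C * ‖v‖ := by rw [← hnorm, ← hv]

lemma energy_proj [DecidableEq ι] [DecidableEq κ] {A : Matrix ι ι ℝ} (hA : A.PosDef)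
    (Q : Matrix ι κ ℝ) (hQ : Qᵀ * Q = 1) (x : ι → ℝ) :
    (Qᵀ *ᵥ x) ⬝ᵥ ((Qᵀ * A⁻¹ * Q)⁻¹) *ᵥ (Qᵀ *ᵥ x) ≤ x ⬝ᵥ A *ᵥ x := by
  have hH : (Qᵀ * A⁻¹ * Q).PosDef := posDef_conj hA.inv Q hQ
  set H := Qᵀ * A⁻¹ * Q with hHdef
  set G := H⁻¹ with hGdef
  set y := Qᵀ *ᵥ x with hydef
  have hHdet : IsUnit H.det := isUnit_iff_ne_zero.mpr hH.det_pos.ne'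
  have hAdet : IsUnit A.det := isUnit_iff_ne_zero.mpr hA.det_pos.ne'
  have hHG : H * G = 1 := Matrix.mul_nonsing_inv _ hHdet
  have hAAi : A * A⁻¹ = 1 := Matrix.mul_nonsing_inv _ hAdet
  set w := A⁻¹ *ᵥ (Q *ᵥ (G *ᵥ y)) with hwdef
  set t := y ⬝ᵥ G *ᵥ y with htdef
  have hAw : A *ᵥ w = Q *ᵥ (G *ᵥ y) := by
    rw [hwdef, Matrix.mulVec_mulVec, hAAi, Matrix.one_mulVec]
  have h1 : x ⬝ᵥ A *ᵥ w = t := by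
    rw [hAw, dot_trans, htdef, hydef]
  have hQtw : Qᵀ *ᵥ w = y := by
    rw [hwdef, Matrix.mulVec_mulVec, Matrix.mulVec_mulVec, Matrix.mulVec_mulVec, ← hHdef]
    rw [show Qᵀ * A⁻¹ * Q * G = H * G from rfl, hHG, Matrix.one_mulVec]
  have h2 : w ⬝ᵥ A *ᵥ w = t := by
    rw [hAw, dot_trans, hQtw]
  have ht0 : 0 ≤ t := h2 ▸ dotA_nonneg hA.posSemidef w
  have key : t ≤ normA A x * Real.sqrt t := by
    calc t = x ⬝ᵥ A *ᵥ w := h1.symm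
      _ ≤ normA A x * normA A w := dotA_CS hA.posSemidef x w
      _ = normA A x * Real.sqrt t := by unfold normA; rw [h2]
  have hx2 : normA A x ^ 2 = x ⬝ᵥ A *ᵥ x := normA_sq' hA.posSemidef x
  nlinarith [Real.sq_sqrt ht0, Real.sqrt_nonneg t,
    mul_self_nonneg (normA A x - Real.sqrt t), Real.sqrt_nonneg (x ⬝ᵥ A *ᵥ x)]

end Helpers

/-- Multilevel compression error accumulation.  Here the `k`-th level
matrix `Φ^{(k+1)}` (with orthonormal columns) is `Φ k : Matrix (Fin (N k)) (Fin (N (k+1))) ℝ`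
for `k < K`, `BΦ k` is the composite `𝚽^{(k)} = Φ^{(1)} ⋯ Φ^{(k)}`, and
`A^{(k)} = ((𝚽^{(k)})ᵀ A⁻¹ 𝚽^{(k)})⁻¹`.  Under the level-wise accuracy hypotheses with
constants `ε_1, …, ε_K`, the composite coarse space `𝚽^{(K)}` compresses `A` with total
error `(∑ ε_k²)^{1/2}`, and the `A`-orthogonal projection onto the column span of
`𝚿^{(K)} = A⁻¹𝚽^{(K)}A^{(K)}` (given by the matrix `𝚿(𝚿ᵀA𝚿)⁻¹𝚿ᵀA`) satisfies the
stated bounds. -/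
theorem multilevel_compression_error (K : ℕ) (hK : 1 ≤ K) (N : ℕ → ℕ)
    (hmono : ∀ k, k < K → N (k + 1) ≤ N k) (hNK : 1 ≤ N K)
    (A : Matrix (Fin (N 0)) (Fin (N 0)) ℝ) (hA : A.PosDef)
    (Φ : (k : ℕ) → Matrix (Fin (N k)) (Fin (N (k + 1))) ℝ)
    (hΦorth : ∀ k, k < K → (Φ k)ᵀ * Φ k = 1)
    (BΦ : (k : ℕ) → Matrix (Fin (N 0)) (Fin (N k)) ℝ)
    (hB0 : BΦ 0 = 1) (hBsucc : ∀ k, BΦ (k + 1) = BΦ k * Φ k)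
    (ε : ℕ → ℝ) (hε : ∀ k, k < K → 0 < ε (k + 1))
    (hlocal : ∀ k, k < K → ∀ y : Fin (N k) → ℝ,
      norm2 (y - (Φ k).mulVec ((Φ k)ᵀ.mulVec y)) ^ 2 ≤
        ε (k + 1) ^ 2 * (y ⬝ᵥ (((BΦ k)ᵀ * A⁻¹ * BΦ k)⁻¹).mulVec y))
    (Ψ : Matrix (Fin (N 0)) (Fin (N K)) ℝ)
    (hΨ : Ψ = A⁻¹ * BΦ K * ((BΦ K)ᵀ * A⁻¹ * BΦ K)⁻¹) :
    (∀ x : Fin (N 0) → ℝ,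
      norm2 (x - (BΦ K).mulVec ((BΦ K)ᵀ.mulVec x)) ≤
        Real.sqrt (∑ k ∈ Finset.range K, ε (k + 1) ^ 2) * normA A x) ∧
    (∀ x : Fin (N 0) → ℝ,
      normA A (x - (Ψ * (Ψᵀ * A * Ψ)⁻¹ * (Ψᵀ * A)).mulVec x) ≤
        Real.sqrt (∑ k ∈ Finset.range K, ε (k + 1) ^ 2) * norm2 (A.mulVec x)) ∧
    (∀ x : Fin (N 0) → ℝ,
      norm2 (x - (Ψ * (Ψᵀ * A * Ψ)⁻¹ * (Ψᵀ * A)).mulVec x) ≤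
        (∑ k ∈ Finset.range K, ε (k + 1) ^ 2) * norm2 (A.mulVec x)) ∧
    specNorm (A⁻¹ - Ψ * (Ψᵀ * A * Ψ)⁻¹ * (Ψᵀ * A) * A⁻¹) ≤
      ∑ k ∈ Finset.range K, ε (k + 1) ^ 2 := by
  classical
  have hAs : A.PosSemidef := hA.posSemidef
  have hAdet : IsUnit A.det := isUnit_iff_ne_zero.mpr hA.det_pos.ne'
  have hAAi : A * A⁻¹ = 1 := Matrix.mul_nonsing_inv _ hAdet
  have hAiA : A⁻¹ * A = 1 := Matrix.nonsing_inv_mul _ hAdet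
  set S := ∑ k ∈ Finset.range K, ε (k + 1) ^ 2 with hSdef
  have hSnn : 0 ≤ S := Finset.sum_nonneg fun _ _ => sq_nonneg _
  have hQorth : ∀ k, k ≤ K → (BΦ k)ᵀ * BΦ k = 1 := by
    intro k
    induction k with
    | zero => intro _; rw [hB0]; simp
    | succ k ih =>
      intro hk
      have hk' : k < K := Nat.lt_of_succ_le hk
      rw [hBsucc, Matrix.transpose_mul, Matrix.mul_assoc, ← Matrix.mul_assoc (BΦ k)ᵀ,
        ih hk'.le, Matrix.one_mul, hΦorth k hk']
  -- Squared version of the first claim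
  have claimA : ∀ k, k ≤ K → ∀ x : Fin (N 0) → ℝ,
      (x - (BΦ k) *ᵥ ((BΦ k)ᵀ *ᵥ x)) ⬝ᵥ (x - (BΦ k) *ᵥ ((BΦ k)ᵀ *ᵥ x)) ≤
        (∑ j ∈ Finset.range k, ε (j + 1) ^ 2) * (x ⬝ᵥ A *ᵥ x) := by
    intro k
    induction k with
    | zero =>
      intro _ x
      rw [hB0]
      simp
    | succ k ih =>
      intro hk x
      have hk' : k < K := Nat.lt_of_succ_le hk
      have hQQ : (BΦ k)ᵀ * BΦ k = 1 := hQorth k hk'.le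
      set Q := BΦ k with hQdef
      set y := Qᵀ *ᵥ x with hydef
      set z := y - (Φ k) *ᵥ ((Φ k)ᵀ *ᵥ y) with hzdef
      set e := x - Q *ᵥ (Qᵀ *ᵥ x) with hedef
      have h1 : BΦ (k+1) *ᵥ ((BΦ (k+1))ᵀ *ᵥ x) = Q *ᵥ (Φ k *ᵥ ((Φ k)ᵀ *ᵥ y)) := by
        rw [hBsucc, Matrix.transpose_mul, ← Matrix.mulVec_mulVec, ← Matrix.mulVec_mulVec]
      have hdecomp : x - BΦ (k+1) *ᵥ ((BΦ (k+1))ᵀ *ᵥ x) = e + Q *ᵥ z := by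
        rw [h1, hedef, hzdef, Matrix.mulVec_sub]
        abel
      have hQte : Qᵀ *ᵥ e = 0 := by
        rw [hedef, Matrix.mulVec_sub, Matrix.mulVec_mulVec, hQQ, Matrix.one_mulVec, sub_self]
      have horth : e ⬝ᵥ (Q *ᵥ z) = 0 := by
        rw [dot_trans, hQte, zero_dotProduct]
      have hQz : (Q *ᵥ z) ⬝ᵥ (Q *ᵥ z) = z ⬝ᵥ z := by
        rw [dot_trans, Matrix.mulVec_mulVec, hQQ, Matrix.one_mulVec]
      have hzbound : z ⬝ᵥ z ≤ ε (k+1) ^ 2 * (x ⬝ᵥ A *ᵥ x) := by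
        have h := hlocal k hk' y
        rw [norm2_sq'] at h
        refine h.trans ?_
        have h2 := energy_proj hA Q hQQ x
        exact mul_le_mul_of_nonneg_left h2 (sq_nonneg _)
      have expand : (e + Q *ᵥ z) ⬝ᵥ (e + Q *ᵥ z)
          = e ⬝ᵥ e + 2 * (e ⬝ᵥ (Q *ᵥ z)) + (Q *ᵥ z) ⬝ᵥ (Q *ᵥ z) := by
        rw [add_dotProduct, dotProduct_add, dotProduct_add, dotProduct_comm (Q *ᵥ z) e]
        ring
      rw [hdecomp, expand, horth, hQz, Finset.sum_range_succ, add_mul]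
      have := ih hk'.le x
      simp only [mul_zero, add_zero]
      linarith
  -- Claim 1
  have claim1 : ∀ x : Fin (N 0) → ℝ,
      norm2 (x - (BΦ K) *ᵥ ((BΦ K)ᵀ *ᵥ x)) ≤ Real.sqrt S * normA A x := by
    intro x
    have h := claimA K le_rfl x
    calc norm2 (x - (BΦ K) *ᵥ ((BΦ K)ᵀ *ᵥ x))
        = Real.sqrt ((x - (BΦ K) *ᵥ ((BΦ K)ᵀ *ᵥ x)) ⬝ᵥ (x - (BΦ K) *ᵥ ((BΦ K)ᵀ *ᵥ x))) := rfl
      _ ≤ Real.sqrt (S * (x ⬝ᵥ A *ᵥ x)) := Real.sqrt_le_sqrt h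
      _ = Real.sqrt S * normA A x := Real.sqrt_mul hSnn _
  -- Setup for projection claims
  set Q := BΦ K with hQdef
  have hQQ : Qᵀ * Q = 1 := hQorth K le_rfl
  set H := Qᵀ * A⁻¹ * Q with hHdef
  set G := H⁻¹ with hGdef
  have hH : H.PosDef := posDef_conj hA.inv Q hQQ
  have hHdet : IsUnit H.det := isUnit_iff_ne_zero.mpr hH.det_pos.ne'
  have hHG : H * G = 1 := Matrix.mul_nonsing_inv _ hHdet
  have hGH : G * H = 1 := Matrix.nonsing_inv_mul _ hHdet
  have hAt : Aᵀ = A := transpose_eq_of_herm hA.1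
  have hAit : (A⁻¹)ᵀ = A⁻¹ := by rw [Matrix.transpose_nonsing_inv, hAt]
  have hHt : Hᵀ = H := transpose_eq_of_herm hH.1
  have hGt : Gᵀ = G := by rw [hGdef, Matrix.transpose_nonsing_inv, hHt]
  have hΨt : Ψᵀ = G * (Qᵀ * A⁻¹) := by
    rw [hΨ, Matrix.transpose_mul, Matrix.transpose_mul, hGt, hAit]
  have hΨA : Ψᵀ * A = G * Qᵀ := by
    rw [hΨt, Matrix.mul_assoc, Matrix.mul_assoc, hAiA, Matrix.mul_one]
  have hΨAΨ : Ψᵀ * A * Ψ = G := by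
    rw [hΨA, hΨ, ← Matrix.mul_assoc, ← Matrix.mul_assoc, Matrix.mul_assoc (G * Qᵀ) A⁻¹ Q,
      Matrix.mul_assoc G Qᵀ (A⁻¹ * Q), ← Matrix.mul_assoc Qᵀ A⁻¹ Q, ← hHdef, hGH,
      Matrix.one_mul]
  have hΨAΨinv : (Ψᵀ * A * Ψ)⁻¹ = H := by
    rw [hΨAΨ, hGdef, Matrix.nonsing_inv_nonsing_inv _ hHdet]
  have hP : Ψ * (Ψᵀ * A * Ψ)⁻¹ * (Ψᵀ * A) = A⁻¹ * Q * (G * Qᵀ) := by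
    rw [hΨAΨinv, hΨA, hΨ, Matrix.mul_assoc (A⁻¹ * Q * G) H (G * Qᵀ),
      ← Matrix.mul_assoc H G Qᵀ, hHG, Matrix.one_mul, Matrix.mul_assoc (A⁻¹ * Q) G Qᵀ]
  -- per-x key facts
  have key : ∀ x : Fin (N 0) → ℝ,
      normA A (x - (Ψ * (Ψᵀ * A * Ψ)⁻¹ * (Ψᵀ * A)) *ᵥ x) ≤ Real.sqrt S * norm2 (A *ᵥ x) ∧
      norm2 (x - (Ψ * (Ψᵀ * A * Ψ)⁻¹ * (Ψᵀ * A)) *ᵥ x) ≤ S * norm2 (A *ᵥ x) := by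
    intro x
    set e := x - (Ψ * (Ψᵀ * A * Ψ)⁻¹ * (Ψᵀ * A)) *ᵥ x with hedef
    have hQtP : Qᵀ * (A⁻¹ * Q * (G * Qᵀ)) = Qᵀ := by
      simp only [← Matrix.mul_assoc]
      rw [← hHdef, hHG, Matrix.one_mul]
    have hAP : A * (A⁻¹ * Q * (G * Qᵀ)) = Q * (G * Qᵀ) := by
      simp only [← Matrix.mul_assoc]
      rw [hAAi, Matrix.one_mul, Matrix.mul_assoc]
    have hQte : Qᵀ *ᵥ e = 0 := by
      rw [hedef, Matrix.mulVec_sub, hP]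
      simp only [Matrix.mulVec_mulVec]
      rw [hQtP, sub_self]
    have hAe : A *ᵥ e = A *ᵥ x - Q *ᵥ ((G * Qᵀ) *ᵥ x) := by
      rw [hedef, Matrix.mulVec_sub, hP]
      simp only [Matrix.mulVec_mulVec]
      rw [hAP]
    have heAe : e ⬝ᵥ A *ᵥ e = e ⬝ᵥ (A *ᵥ x) := by
      rw [hAe, dotProduct_sub, dot_trans Q e, hQte, zero_dotProduct, sub_zero]
    have he2 : norm2 e ≤ Real.sqrt S * normA A e := by
      have h := claim1 e
      rwa [hQte, Matrix.mulVec_zero, sub_zero] at h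
    have hcs : e ⬝ᵥ (A *ᵥ x) ≤ norm2 e * norm2 (A *ᵥ x) := dot_le_norm2_mul e (A *ᵥ x)
    have hA2 : normA A e ^ 2 ≤ Real.sqrt S * normA A e * norm2 (A *ᵥ x) := by
      calc normA A e ^ 2 = e ⬝ᵥ A *ᵥ e := normA_sq' hAs e
        _ = e ⬝ᵥ (A *ᵥ x) := heAe
        _ ≤ norm2 e * norm2 (A *ᵥ x) := hcs
        _ ≤ Real.sqrt S * normA A e * norm2 (A *ᵥ x) :=
            mul_le_mul_of_nonneg_right he2 (norm2_nonneg' (A *ᵥ x))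
    have hnAe : 0 ≤ normA A e := Real.sqrt_nonneg _
    have claim2 : normA A e ≤ Real.sqrt S * norm2 (A *ᵥ x) := by
      rcases eq_or_lt_of_le hnAe with h0 | h0
      · rw [← h0]
        exact mul_nonneg (Real.sqrt_nonneg _) (norm2_nonneg' (A *ᵥ x))
      · have := hA2
        rw [pow_two] at this
        nlinarith
    refine ⟨claim2, ?_⟩
    calc norm2 e ≤ Real.sqrt S * normA A e := he2
      _ ≤ Real.sqrt S * (Real.sqrt S * norm2 (A *ᵥ x)) :=
          mul_le_mul_of_nonneg_left claim2 (Real.sqrt_nonneg _)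
      _ = S * norm2 (A *ᵥ x) := by rw [← mul_assoc, Real.mul_self_sqrt hSnn]
  refine ⟨claim1, fun x => (key x).1, fun x => (key x).2, ?_⟩
  -- spectral norm claim
  apply specNorm_le_of_bound hSnn
  intro v
  have hx : A *ᵥ (A⁻¹ *ᵥ v) = v := by
    rw [Matrix.mulVec_mulVec, hAAi, Matrix.one_mulVec]
  have h := (key (A⁻¹ *ᵥ v)).2
  rw [hx] at h
  have hMv : (A⁻¹ - Ψ * (Ψᵀ * A * Ψ)⁻¹ * (Ψᵀ * A) * A⁻¹) *ᵥ v
      = (A⁻¹ *ᵥ v) - (Ψ * (Ψᵀ * A * Ψ)⁻¹ * (Ψᵀ * A)) *ᵥ (A⁻¹ *ᵥ v) := by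
    rw [Matrix.sub_mulVec, Matrix.mulVec_mulVec]
  rw [hMv]
  exact h
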